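/- arXiv:1910.06775 — 3 statements merged into one kernel-verified Lean document; each statement's English description precedes it below -/
import Mathlib

section
/- Let A ≥ 0 on H and B = diag(A,...,A) on ⊕ⁿH. Let T = (T_{ij}) be an n×n operator matrix with each T_{ij} admitting an A-adjoint. Define the n×n complex matrix T' with t_{ii} = w_A(T_{ii}) and t_{ij} = ‖T_{ij}‖_A for i ≠ j. Then w_B(T) ≤ w(T'). -/
open scoped ComplexOrder

/-- The A-numerical radius: `w_A(T) = sup{|⟨ATx,x⟩| : ⟨Ax,x⟩ = 1}` (with the paper's
convention `⟨u,v⟩ = inner ℂ v u` in Mathlib's notation). -/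
noncomputable def wA {H : Type*} [NormedAddCommGroup H] [InnerProductSpace ℂ H]
    (A T : H →L[ℂ] H) : ℝ :=
  sSup {r : ℝ | ∃ x : H, (inner ℂ x (A x) : ℂ) = 1 ∧ r = ‖(inner ℂ x (A (T x)) : ℂ)‖}

/-- The A-Crawford number: `m_A(T) = inf{|⟨ATx,x⟩| : ⟨Ax,x⟩ = 1}`. -/
noncomputable def mA {H : Type*} [NormedAddCommGroup H] [InnerProductSpace ℂ H]
    (A T : H →L[ℂ] H) : ℝ :=
  sInf {r : ℝ | ∃ x : H, (inner ℂ x (A x) : ℂ) = 1 ∧ r = ‖(inner ℂ x (A (T x)) : ℂ)‖}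

/-- The A-operator seminorm: `‖T‖_A = sup{‖Tx‖_A/‖x‖_A : x ∈ closure (range A), x ≠ 0}`. -/
noncomputable def normA {H : Type*} [NormedAddCommGroup H] [InnerProductSpace ℂ H]
    (A T : H →L[ℂ] H) : ℝ :=
  sSup {r : ℝ | ∃ x ∈ closure (Set.range A), x ≠ 0 ∧
    r = Real.sqrt ((inner ℂ (T x) (A (T x)) : ℂ)).re / Real.sqrt ((inner ℂ x (A x) : ℂ)).re}

/-- The numerical radius of an operator on a complex Hilbert space. -/
noncomputable def nr {H : Type*} [NormedAddCommGroup H] [InnerProductSpace ℂ H]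
    (T : H →L[ℂ] H) : ℝ :=
  sSup {r : ℝ | ∃ x : H, ‖x‖ = 1 ∧ r = ‖(inner ℂ (T x) x : ℂ)‖}


set_option maxHeartbeats 1000000
set_option synthInstance.maxHeartbeats 400000
set_option linter.unusedSectionVars false
set_option linter.unusedVariables false

namespace WBAux

open ContinuousLinearMap

variable {H : Type*} [NormedAddCommGroup H] [InnerProductSpace ℂ H] [CompleteSpace H]

lemma key (A P : H →L[ℂ] H) (hPsa : star P = P) (hPP : P * P = A) (x y : H) :
    (inner ℂ x (A y) : ℂ) = inner ℂ (P x) (P y) := by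
  have h1 : A y = P (P y) := by rw [← hPP]; rfl
  rw [h1, ← adjoint_inner_left, ← star_eq_adjoint, hPsa]

lemma normsq (A P : H →L[ℂ] H) (hPsa : star P = P) (hPP : P * P = A) (x : H) :
    (inner ℂ x (A x) : ℂ) = ((‖P x‖ : ℂ)) ^ 2 := by
  rw [key A P hPsa hPP, inner_self_eq_norm_sq_to_K]; norm_cast

lemma normsq_re (A P : H →L[ℂ] H) (hPsa : star P = P) (hPP : P * P = A) (x : H) :
    ((inner ℂ x (A x) : ℂ)).re = ‖P x‖ ^ 2 := by
  rw [normsq A P hPsa hPP, ← Complex.ofReal_pow, Complex.ofReal_re]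

lemma step (A P R : H →L[ℂ] H) (hPsa : star P = P) (hPP : P * P = A)
    (hR : A * R = star R * A) (x : H) :
    ‖P (R x)‖ ^ 2 ≤ ‖P (R (R x))‖ * ‖P x‖ := by
  have h2 : A (R x) = (adjoint R) (A x) := by
    rw [← star_eq_adjoint, ← ContinuousLinearMap.mul_apply, hR, ContinuousLinearMap.mul_apply]
  have h1 : (inner ℂ (R x) (A (R x)) : ℂ) = inner ℂ (P (R (R x))) (P x) := by
    rw [h2, adjoint_inner_right, ← key A P hPsa hPP]
  have h3 : ‖P (R x)‖ ^ 2 = ((inner ℂ (R x) (A (R x)) : ℂ)).re :=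
    (normsq_re A P hPsa hPP (R x)).symm
  rw [h3, h1]
  calc (inner ℂ (P (R (R x))) (P x) : ℂ).re ≤ ‖(inner ℂ (P (R (R x))) (P x) : ℂ)‖ :=
        Complex.re_le_norm _
    _ ≤ ‖P (R (R x))‖ * ‖P x‖ := norm_inner_le_norm _ _

lemma pow_sa (A R : H →L[ℂ] H) (hR : A * R = star R * A) (m : ℕ) :
    A * R ^ m = star (R ^ m) * A := by
  induction m with
  | zero => simp
  | succ k ih =>
    calc A * R ^ (k + 1) = A * (R * R ^ k) := by rw [pow_succ']
      _ = (A * R) * R ^ k := (mul_assoc _ _ _).symm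
      _ = (star R * A) * R ^ k := by rw [hR]
      _ = star R * (A * R ^ k) := mul_assoc _ _ _
      _ = star R * (star (R ^ k) * A) := by rw [ih]
      _ = (star R * star (R ^ k)) * A := (mul_assoc _ _ _).symm
      _ = star (R ^ k * R) * A := by rw [star_mul]
      _ = star (R ^ (k + 1)) * A := by rw [← pow_succ]


lemma iterate (A P R : H →L[ℂ] H) (hPsa : star P = P) (hPP : P * P = A)
    (hR : A * R = star R * A) (x : H) (k : ℕ) :
    ‖P (R x)‖ ^ (2 ^ k) * ‖P x‖ ≤ ‖P ((R ^ (2 ^ k)) x)‖ * ‖P x‖ ^ (2 ^ k) := by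
  induction k with
  | zero => simp
  | succ k ih =>
    rcases eq_or_lt_of_le (norm_nonneg (P x)) with hp | hp
    · calc ‖P (R x)‖ ^ 2 ^ (k + 1) * ‖P x‖ = 0 := by rw [← hp, mul_zero]
        _ ≤ _ := by positivity
    · have h1 : (‖P (R x)‖ ^ 2 ^ k * ‖P x‖) ^ 2 ≤ (‖P ((R ^ 2 ^ k) x)‖ * ‖P x‖ ^ 2 ^ k) ^ 2 := by
        apply pow_le_pow_left₀ (by positivity) ih
      have h2 : ‖P ((R ^ 2 ^ k) x)‖ ^ 2 ≤ ‖P ((R ^ 2 ^ (k+1)) x)‖ * ‖P x‖ := by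
        have := step A P (R ^ 2 ^ k) hPsa hPP (pow_sa A R hR (2 ^ k)) x
        have hpow : (R ^ 2 ^ k) ((R ^ 2 ^ k) x) = (R ^ 2 ^ (k + 1)) x := by
          rw [← ContinuousLinearMap.mul_apply, ← pow_add]
          congr 1
          ring
        rwa [hpow] at this
      have key : (‖P (R x)‖ ^ 2 ^ (k+1) * ‖P x‖) * ‖P x‖ ≤
          (‖P ((R ^ 2 ^ (k+1)) x)‖ * ‖P x‖ ^ 2 ^ (k+1)) * ‖P x‖ := by
        calc (‖P (R x)‖ ^ 2 ^ (k+1) * ‖P x‖) * ‖P x‖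
            = (‖P (R x)‖ ^ 2 ^ k * ‖P x‖) ^ 2 := by ring_nf
          _ ≤ (‖P ((R ^ 2 ^ k) x)‖ * ‖P x‖ ^ 2 ^ k) ^ 2 := h1
          _ = ‖P ((R ^ 2 ^ k) x)‖ ^ 2 * (‖P x‖ ^ 2 ^ k) ^ 2 := by ring
          _ ≤ (‖P ((R ^ 2 ^ (k+1)) x)‖ * ‖P x‖) * (‖P x‖ ^ 2 ^ k) ^ 2 := by
              apply mul_le_mul_of_nonneg_right h2 (by positivity)
          _ = (‖P ((R ^ 2 ^ (k+1)) x)‖ * ‖P x‖ ^ 2 ^ (k+1)) * ‖P x‖ := by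
              rw [pow_succ, pow_mul]; ring
      exact le_of_mul_le_mul_right key hp

lemma sa_bound (A P R : H →L[ℂ] H) (hPsa : star P = P) (hPP : P * P = A)
    (hR : A * R = star R * A) (x : H) : ‖P (R x)‖ ≤ ‖R‖ * ‖P x‖ := by
  rcases eq_or_lt_of_le (norm_nonneg (P x)) with hp | hp
  · have h := step A P R hPsa hPP hR x
    rw [← hp, mul_zero] at h
    have : ‖P (R x)‖ = 0 := by nlinarith [norm_nonneg (P (R x))]
    rw [this, ← hp, mul_zero]
  · by_contra hcon
    push_neg at hcon
    have hR0 : 0 < ‖R‖ := by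
      rcases eq_or_lt_of_le (norm_nonneg R) with h0 | h0
      · exfalso
        have : R = 0 := by rwa [eq_comm, norm_eq_zero] at h0
        rw [this] at hcon
        simp at hcon
      · exact h0
    set q : ℝ := ‖P (R x)‖ / (‖R‖ * ‖P x‖) with hq
    have hq1 : 1 < q := (one_lt_div (by positivity)).mpr hcon
    set K : ℝ := ‖P‖ * ‖x‖ / ‖P x‖ with hK
    have hbound : ∀ k : ℕ, q ^ (2 ^ k) ≤ K := by
      intro k
      have h1 := iterate A P R hPsa hPP hR x k
      have h2 : ‖P ((R ^ 2 ^ k) x)‖ ≤ ‖P‖ * ‖R‖ ^ 2 ^ k * ‖x‖ := by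
        calc ‖P ((R ^ 2 ^ k) x)‖ ≤ ‖P‖ * ‖(R ^ 2 ^ k) x‖ := le_opNorm _ _
          _ ≤ ‖P‖ * (‖R ^ 2 ^ k‖ * ‖x‖) := by
              apply mul_le_mul_of_nonneg_left (le_opNorm _ _) (norm_nonneg _)
          _ ≤ ‖P‖ * (‖R‖ ^ 2 ^ k * ‖x‖) := by
              apply mul_le_mul_of_nonneg_left
                (mul_le_mul_of_nonneg_right (norm_pow_le' R (by positivity)) (norm_nonneg _))
                (norm_nonneg _)
          _ = ‖P‖ * ‖R‖ ^ 2 ^ k * ‖x‖ := by ring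
      have h3 : ‖P (R x)‖ ^ 2 ^ k * ‖P x‖ ≤ (‖P‖ * ‖R‖ ^ 2 ^ k * ‖x‖) * ‖P x‖ ^ 2 ^ k :=
        h1.trans (mul_le_mul_of_nonneg_right h2 (by positivity))
      rw [hq, hK, div_pow, div_le_div_iff₀ (by positivity) hp]
      calc ‖P (R x)‖ ^ 2 ^ k * ‖P x‖ ≤ (‖P‖ * ‖R‖ ^ 2 ^ k * ‖x‖) * ‖P x‖ ^ 2 ^ k := h3
        _ = ‖P‖ * ‖x‖ * (‖R‖ * ‖P x‖) ^ 2 ^ k := by rw [mul_pow]; ring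
    obtain ⟨m, hm⟩ := pow_unbounded_of_one_lt K hq1
    have : q ^ m ≤ q ^ 2 ^ m := pow_le_pow_right₀ hq1.le (Nat.lt_two_pow_self (n := m)).le
    exact absurd (hbound m) (not_le.mpr (hm.trans_le this))


lemma sym_move (A : H →L[ℂ] H) (hAsa : star A = A) (u v : H) :
    (inner ℂ (A u) v : ℂ) = inner ℂ u (A v) := by
  have h := adjoint_inner_left A v u
  rw [← star_eq_adjoint, hAsa] at h
  exact h

lemma flip_adj (A T S : H →L[ℂ] H) (hAsa : star A = A) (hS : A * S = star T * A) :
    A * T = star S * A := by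
  have h := congrArg star hS
  rw [star_mul, star_mul, hAsa, star_star] at h
  exact h.symm

lemma adj_bound (A P T S : H →L[ℂ] H) (hAsa : star A = A) (hPsa : star P = P)
    (hPP : P * P = A) (hS : A * S = star T * A) (x : H) :
    ‖P (T x)‖ ≤ Real.sqrt ‖S * T‖ * ‖P x‖ := by
  have hS' := flip_adj A T S hAsa hS
  have hST : A * (S * T) = star (S * T) * A := by
    calc A * (S * T) = (A * S) * T := (mul_assoc _ _ _).symm
      _ = (star T * A) * T := by rw [hS]
      _ = star T * (A * T) := mul_assoc _ _ _
      _ = star T * (star S * A) := by rw [hS']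
      _ = (star T * star S) * A := (mul_assoc _ _ _).symm
      _ = star (S * T) * A := by rw [star_mul]
  have h1 : ‖P (T x)‖ ^ 2 ≤ ‖S * T‖ * ‖P x‖ ^ 2 := by
    have e1 : ‖P (T x)‖ ^ 2 = ((inner ℂ (T x) (A (T x)) : ℂ)).re :=
      (normsq_re A P hPsa hPP (T x)).symm
    have e2 : A (T x) = (adjoint S) (A x) := by
      rw [← star_eq_adjoint, ← ContinuousLinearMap.mul_apply, hS', ContinuousLinearMap.mul_apply]
    have e3 : (inner ℂ (T x) (A (T x)) : ℂ) = inner ℂ (P (S (T x))) (P x) := by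
      rw [e2, adjoint_inner_right, ← key A P hPsa hPP]
    have e4 : ‖P (S (T x))‖ ≤ ‖S * T‖ * ‖P x‖ := by
      have := sa_bound A P (S * T) hPsa hPP hST x
      rwa [ContinuousLinearMap.mul_apply] at this
    calc ‖P (T x)‖ ^ 2 = ((inner ℂ (P (S (T x))) (P x) : ℂ)).re := by rw [e1, e3]
      _ ≤ ‖(inner ℂ (P (S (T x))) (P x) : ℂ)‖ := Complex.re_le_norm _
      _ ≤ ‖P (S (T x))‖ * ‖P x‖ := norm_inner_le_norm _ _
      _ ≤ (‖S * T‖ * ‖P x‖) * ‖P x‖ := mul_le_mul_of_nonneg_right e4 (norm_nonneg _)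
      _ = ‖S * T‖ * ‖P x‖ ^ 2 := by ring
  calc ‖P (T x)‖ = Real.sqrt (‖P (T x)‖ ^ 2) := (Real.sqrt_sq (norm_nonneg _)).symm
    _ ≤ Real.sqrt (‖S * T‖ * ‖P x‖ ^ 2) := Real.sqrt_le_sqrt h1
    _ = Real.sqrt ‖S * T‖ * ‖P x‖ := by
        rw [Real.sqrt_mul (norm_nonneg _), Real.sqrt_sq (norm_nonneg _)]

lemma closure_ne (A P : H →L[ℂ] H) (hAsa : star A = A) (hPsa : star P = P)
    (hPP : P * P = A) (z : H) (hz : z ∈ closure (Set.range ⇑A)) (hPz : P z = 0) :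
    z = 0 := by
  have hAz : A z = 0 := by rw [← hPP, ContinuousLinearMap.mul_apply, hPz, map_zero]
  have hzero : ∀ u : H, (inner ℂ z u : ℂ) = 0 → True := fun _ _ => trivial
  have hsub : Set.range ⇑A ⊆ {u | (inner ℂ z u : ℂ) = 0} := by
    rintro _ ⟨u, rfl⟩
    have h := (sym_move A hAsa z u).symm
    simp [Set.mem_setOf_eq, h, hAz]
  have hclosed : IsClosed {u : H | (inner ℂ z u : ℂ) = 0} := by
    have : {u : H | (inner ℂ z u : ℂ) = 0} = (innerSL ℂ z) ⁻¹' {0} := rfl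
    rw [this]
    exact IsClosed.preimage (innerSL ℂ z).continuous isClosed_singleton
  have hz0 : (inner ℂ z z : ℂ) = 0 := closure_minimal hsub hclosed hz
  exact inner_self_eq_zero.mp hz0

lemma normA_nonneg2 (A T : H →L[ℂ] H) : 0 ≤ normA A T := by
  apply Real.sSup_nonneg
  rintro r ⟨x, _, _, rfl⟩
  positivity

lemma normA_bound (A P T S : H →L[ℂ] H) (hAsa : star A = A) (hPsa : star P = P)
    (hPP : P * P = A) (hS : A * S = star T * A) (x : H) :
    ‖P (T x)‖ ≤ normA A T * ‖P x‖ := by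
  have hS' := flip_adj A T S hAsa hS
  -- the set defining normA is bounded above
  have hbdd : BddAbove {r : ℝ | ∃ z ∈ closure (Set.range ⇑A), z ≠ 0 ∧
      r = Real.sqrt ((inner ℂ (T z) (A (T z)) : ℂ)).re / Real.sqrt ((inner ℂ z (A z) : ℂ)).re} := by
    refine ⟨Real.sqrt ‖S * T‖, ?_⟩
    rintro r ⟨z, hzc, hz0, rfl⟩
    have hPz : 0 < ‖P z‖ := by
      rcases eq_or_lt_of_le (norm_nonneg (P z)) with h | h
      · exact absurd (closure_ne A P hAsa hPsa hPP z hzc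
          (norm_eq_zero.mp h.symm)) hz0
      · exact h
    rw [normsq_re A P hPsa hPP, normsq_re A P hPsa hPP,
      Real.sqrt_sq (norm_nonneg _), Real.sqrt_sq (norm_nonneg _)]
    rw [div_le_iff₀ hPz]
    exact adj_bound A P T S hAsa hPsa hPP hS z
  -- orthogonal decomposition
  set K : Submodule ℂ H := (LinearMap.range (A : H →ₗ[ℂ] H)).topologicalClosure with hK
  haveI : CompleteSpace K :=
    (LinearMap.range (A : H →ₗ[ℂ] H)).isClosed_topologicalClosure.completeSpace_coe
  set z : H := (K.orthogonalProjectionOnto x : H) with hzdef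
  set y : H := x - z with hydef
  have hyK : y ∈ Kᗮ := Submodule.sub_starProjection_mem_orthogonal (K := K) x
  have hrange : ∀ u : H, A u ∈ K := fun u =>
    Submodule.le_topologicalClosure _ (LinearMap.mem_range_self _ u)
  have hAy : A y = 0 := by
    have h1 : (inner ℂ (A y) (A y) : ℂ) = inner ℂ y (A (A y)) := sym_move A hAsa y (A y)
    have h2 : (inner ℂ y (A (A y)) : ℂ) = 0 := by
      have := (Submodule.mem_orthogonal K y).mp hyK (A (A y)) (hrange (A y))
      rw [← inner_conj_symm, this, map_zero]
    exact inner_self_eq_zero.mp (h1.trans h2)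
  have hPy : P y = 0 := by
    have : ‖P y‖ ^ 2 = 0 := by
      rw [← normsq_re A P hPsa hPP, hAy, inner_zero_right, Complex.zero_re]
    exact norm_eq_zero.mp ((pow_eq_zero_iff two_ne_zero).mp this)
  have hPTy : P (T y) = 0 := by
    have hATy : A (T y) = 0 := by
      have : A (T y) = (star S) (A y) := by rw [← ContinuousLinearMap.mul_apply, hS', ContinuousLinearMap.mul_apply]
      rw [this, hAy, map_zero]
    have : ‖P (T y)‖ ^ 2 = 0 := by
      rw [← normsq_re A P hPsa hPP, hATy, inner_zero_right, Complex.zero_re]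
    exact norm_eq_zero.mp ((pow_eq_zero_iff two_ne_zero).mp this)
  have hxzy : x = z + y := by rw [hydef]; abel
  have hPx : P x = P z := by rw [hxzy, map_add, hPy, add_zero]
  have hPTx : P (T x) = P (T z) := by rw [hxzy, map_add, map_add, hPTy, add_zero]
  rw [hPx, hPTx]
  by_cases hz0 : z = 0
  · simp [hz0]
  · have hzc : z ∈ closure (Set.range ⇑A) := by
      have h1 : z ∈ K := SetLike.coe_mem _
      have h2 : (K : Set H) = closure (Set.range ⇑A) := by
        rw [hK, Submodule.topologicalClosure_coe]
        congr 1
      rw [← h2]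
      exact h1
    have hPz : 0 < ‖P z‖ := by
      rcases eq_or_lt_of_le (norm_nonneg (P z)) with h | h
      · exact absurd (closure_ne A P hAsa hPsa hPP z hzc (norm_eq_zero.mp h.symm)) hz0
      · exact h
    have hmem : ‖P (T z)‖ / ‖P z‖ ∈ {r : ℝ | ∃ w ∈ closure (Set.range ⇑A), w ≠ 0 ∧
        r = Real.sqrt ((inner ℂ (T w) (A (T w)) : ℂ)).re / Real.sqrt ((inner ℂ w (A w) : ℂ)).re} := by
      refine ⟨z, hzc, hz0, ?_⟩
      rw [normsq_re A P hPsa hPP, normsq_re A P hPsa hPP,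
        Real.sqrt_sq (norm_nonneg _), Real.sqrt_sq (norm_nonneg _)]
    have hle : ‖P (T z)‖ / ‖P z‖ ≤ normA A T := le_csSup hbdd hmem
    calc ‖P (T z)‖ = (‖P (T z)‖ / ‖P z‖) * ‖P z‖ := (div_mul_cancel₀ _ (ne_of_gt hPz)).symm
      _ ≤ normA A T * ‖P z‖ := mul_le_mul_of_nonneg_right hle (norm_nonneg _)


lemma pos_setup (A : H →L[ℂ] H) (hA : ∀ x : H, 0 ≤ (inner ℂ x (A x) : ℂ)) :
    ∃ P : H →L[ℂ] H, star P = P ∧ P * P = A ∧ star A = A := by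
  have hA0 : (0 : H →L[ℂ] H) ≤ A := by
    rw [ContinuousLinearMap.nonneg_iff_isPositive, ContinuousLinearMap.isPositive_iff_complex]
    intro x
    have h := hA x
    rw [Complex.nonneg_iff] at h
    have hconj : (inner ℂ (A x) x : ℂ) = (starRingEnd ℂ) (inner ℂ x (A x) : ℂ) :=
      (inner_conj_symm _ _).symm
    have him : (inner ℂ x (A x) : ℂ).im = 0 := h.2.symm
    have hconj2 : (inner ℂ (A x) x : ℂ) = inner ℂ x (A x) := by
      rw [hconj, Complex.conj_eq_iff_im.mpr him]
    rw [hconj2]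
    refine ⟨?_, h.1⟩
    apply Complex.ext
    · simp
    · simp [him]
  have hAsa : star A = A :=
    ((ContinuousLinearMap.nonneg_iff_isPositive A).mp hA0).isSelfAdjoint
  refine ⟨CFC.sqrt A, ?_, CFC.sqrt_mul_sqrt_self A hA0, hAsa⟩
  exact IsSelfAdjoint.of_nonneg (CFC.sqrt_nonneg (a := A))

lemma wA_nonneg2 (A T : H →L[ℂ] H) : 0 ≤ wA A T := by
  apply Real.sSup_nonneg
  rintro r ⟨x, _, rfl⟩
  positivity

lemma wA_bound (A P T S : H →L[ℂ] H) (hAsa : star A = A) (hPsa : star P = P)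
    (hPP : P * P = A) (hS : A * S = star T * A) (x : H) :
    ‖(inner ℂ x (A (T x)) : ℂ)‖ ≤ wA A T * ‖P x‖ ^ 2 := by
  have hbdd : BddAbove {r : ℝ | ∃ u : H, (inner ℂ u (A u) : ℂ) = 1 ∧
      r = ‖(inner ℂ u (A (T u)) : ℂ)‖} := by
    refine ⟨Real.sqrt ‖S * T‖, ?_⟩
    rintro r ⟨u, hu1, rfl⟩
    have hPu : ‖P u‖ = 1 := by
      have h := normsq A P hPsa hPP u
      rw [hu1] at h
      have : (‖P u‖ : ℝ) ^ 2 = 1 := by exact_mod_cast h.symm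
      nlinarith [norm_nonneg (P u)]
    calc ‖(inner ℂ u (A (T u)) : ℂ)‖ = ‖(inner ℂ (P u) (P (T u)) : ℂ)‖ := by
          rw [key A P hPsa hPP]
      _ ≤ ‖P u‖ * ‖P (T u)‖ := norm_inner_le_norm _ _
      _ ≤ ‖P u‖ * (Real.sqrt ‖S * T‖ * ‖P u‖) :=
          mul_le_mul_of_nonneg_left (adj_bound A P T S hAsa hPsa hPP hS u) (norm_nonneg _)
      _ = Real.sqrt ‖S * T‖ := by rw [hPu]; ring
  by_cases hPx : ‖P x‖ = 0
  · have hPx0 : P x = 0 := norm_eq_zero.mp hPx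
    rw [key A P hPsa hPP, hPx0, inner_zero_left, norm_zero]
    have := wA_nonneg2 A T
    positivity
  · have hc : 0 < ‖P x‖ := lt_of_le_of_ne (norm_nonneg _) (Ne.symm hPx)
    set c : ℝ := ‖P x‖ with hcdef
    set u : H := ((c : ℂ))⁻¹ • x with hudef
    have hcne : (c : ℂ) ≠ 0 := by
      simp only [ne_eq, Complex.ofReal_eq_zero]
      exact ne_of_gt hc
    have hu1 : (inner ℂ u (A u) : ℂ) = 1 := by
      rw [hudef, map_smul, inner_smul_left, inner_smul_right, normsq A P hPsa hPP,
        map_inv₀, Complex.conj_ofReal, ← hcdef]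
      field_simp
    have hval : ‖(inner ℂ u (A (T u)) : ℂ)‖ = c⁻¹ * c⁻¹ * ‖(inner ℂ x (A (T x)) : ℂ)‖ := by
      rw [hudef, map_smul, map_smul, inner_smul_left, inner_smul_right]
      rw [norm_mul, norm_mul, map_inv₀, Complex.conj_ofReal]
      simp [abs_of_pos hc]
      ring
    have hle : ‖(inner ℂ u (A (T u)) : ℂ)‖ ≤ wA A T := le_csSup hbdd ⟨u, hu1, rfl⟩
    rw [hval] at hle
    have h3 := mul_le_mul_of_nonneg_right hle (sq_nonneg c)
    have heq : (c⁻¹ * c⁻¹ * ‖(inner ℂ x (A (T x)) : ℂ)‖) * c ^ 2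
        = ‖(inner ℂ x (A (T x)) : ℂ)‖ := by
      rw [pow_two]
      field_simp
    rw [heq] at h3
    exact h3

lemma nr_nonneg2 {E : Type*} [NormedAddCommGroup E] [InnerProductSpace ℂ E]
    (T : E →L[ℂ] E) : 0 ≤ nr T := by
  apply Real.sSup_nonneg
  rintro r ⟨x, _, rfl⟩
  positivity

lemma le_nr2 {E : Type*} [NormedAddCommGroup E] [InnerProductSpace ℂ E]
    (T : E →L[ℂ] E) (u : E) (hu : ‖u‖ = 1) : ‖(inner ℂ (T u) u : ℂ)‖ ≤ nr T := by
  have hmem : ‖(inner ℂ (T u) u : ℂ)‖ ∈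
      {r : ℝ | ∃ x : E, ‖x‖ = 1 ∧ r = ‖(inner ℂ (T x) x : ℂ)‖} := ⟨u, hu, rfl⟩
  apply le_csSup _ hmem
  refine ⟨‖T‖, ?_⟩
  rintro r ⟨w, hw, rfl⟩
  calc ‖(inner ℂ (T w) w : ℂ)‖ ≤ ‖T w‖ * ‖w‖ := norm_inner_le_norm _ _
    _ ≤ (‖T‖ * ‖w‖) * ‖w‖ := mul_le_mul_of_nonneg_right (le_opNorm T w) (norm_nonneg _)
    _ = ‖T‖ := by rw [hw]; ring


end WBAux

open WBAux in
/-- For `A ≥ 0`, `B = diag(A,…,A)` and `T = (M i j)` an `n × n` operator matrix whose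
entries admit A-adjoints, `w_B(T) ≤ w(T')` where `t'_{ii} = w_A(M i i)` and
`t'_{ij} = ‖M i j‖_A` for `i ≠ j`. -/
theorem wB_opMatrix_le (n : ℕ) {H : Type*} [NormedAddCommGroup H]
    [InnerProductSpace ℂ H] [CompleteSpace H] (A : H →L[ℂ] H)
    (hA : ∀ x : H, 0 ≤ (inner ℂ x (A x) : ℂ))
    (M : Fin n → Fin n → (H →L[ℂ] H))
    (hadj : ∀ i j, ∃ S : H →L[ℂ] H,
      A.comp S = (ContinuousLinearMap.adjoint (M i j)).comp A)
    (B T : (PiLp 2 fun _ : Fin n => H) →L[ℂ] (PiLp 2 fun _ : Fin n => H))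
    (hB : ∀ x i, B x i = A (x i))
    (hT : ∀ x, ∀ i, T x i = ∑ j, M i j (x j)) :
    wA B T ≤ nr (Matrix.toEuclideanCLM (𝕜 := ℂ) (Matrix.of fun i j =>
      if i = j then ((wA A (M i i) : ℝ) : ℂ) else ((normA A (M i j) : ℝ) : ℂ))) := by
  obtain ⟨P, hPsa, hPP, hAsa⟩ := pos_setup A hA
  have hadj' : ∀ i j, ∃ S : H →L[ℂ] H, A * S = star (M i j) * A := by
    intro i j
    obtain ⟨S, hS⟩ := hadj i j
    exact ⟨S, by rw [ContinuousLinearMap.mul_def, ContinuousLinearMap.mul_def,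
      ContinuousLinearMap.star_eq_adjoint]; exact hS⟩
  set T' : Matrix (Fin n) (Fin n) ℂ := Matrix.of (fun i j =>
      if i = j then ((wA A (M i i) : ℝ) : ℂ) else ((normA A (M i j) : ℝ) : ℂ)) with hT'
  set T'' := Matrix.toEuclideanCLM (𝕜 := ℂ) T' with hT''
  apply Real.sSup_le _ (nr_nonneg2 _)
  rintro r ⟨x, hx1, rfl⟩
  set a : Fin n → ℝ := fun i => ‖P (x i)‖ with ha
  have ha0 : ∀ i, 0 ≤ a i := fun i => norm_nonneg _
  have hsum : ∑ i, a i ^ 2 = 1 := by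
    have h1 : (inner ℂ x (B x) : ℂ) = ∑ i, ((a i : ℝ) : ℂ) ^ 2 := by
      rw [PiLp.inner_apply]
      apply Finset.sum_congr rfl
      intro i _
      rw [hB, normsq A P hPsa hPP]
    rw [hx1] at h1
    have h3 : ((∑ i, a i ^ 2 : ℝ) : ℂ) = 1 := by
      push_cast
      rw [← h1]
    exact_mod_cast h3
  set t : Fin n → Fin n → ℝ :=
    (fun i j => if i = j then wA A (M i i) else normA A (M i j)) with htdef
  have ht0 : ∀ i j, 0 ≤ t i j := by
    intro i j
    rw [htdef]
    dsimp only
    split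
    · exact wA_nonneg2 A _
    · exact normA_nonneg2 A _
  have hterm : ∀ i j, ‖(inner ℂ (x i) (A (M i j (x j))) : ℂ)‖ ≤ t i j * (a i * a j) := by
    intro i j
    obtain ⟨S, hS⟩ := hadj' i j
    by_cases hij : i = j
    · subst hij
      have h := wA_bound A P (M i i) S hAsa hPsa hPP hS (x i)
      simp only [htdef, if_pos rfl]
      calc ‖(inner ℂ (x i) (A (M i i (x i))) : ℂ)‖ ≤ wA A (M i i) * ‖P (x i)‖ ^ 2 := h
        _ = wA A (M i i) * (a i * a i) := by rw [ha]; ring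
    · simp only [htdef, if_neg hij]
      calc ‖(inner ℂ (x i) (A (M i j (x j))) : ℂ)‖
          = ‖(inner ℂ (P (x i)) (P (M i j (x j))) : ℂ)‖ := by rw [key A P hPsa hPP]
        _ ≤ ‖P (x i)‖ * ‖P (M i j (x j))‖ := norm_inner_le_norm _ _
        _ ≤ ‖P (x i)‖ * (normA A (M i j) * ‖P (x j)‖) :=
            mul_le_mul_of_nonneg_left
              (normA_bound A P (M i j) S hAsa hPsa hPP hS (x j)) (norm_nonneg _)
        _ = normA A (M i j) * (a i * a j) := by rw [ha]; ring
  have hexpand : (inner ℂ x (B (T x)) : ℂ) = ∑ i, ∑ j, (inner ℂ (x i) (A (M i j (x j))) : ℂ) := by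
    rw [PiLp.inner_apply]
    apply Finset.sum_congr rfl
    intro i _
    rw [hB, hT, map_sum, inner_sum]
  have hr : ‖(inner ℂ x (B (T x)) : ℂ)‖ ≤ ∑ i, ∑ j, t i j * (a i * a j) := by
    rw [hexpand]
    refine (norm_sum_le _ _).trans ?_
    apply Finset.sum_le_sum
    intro i _
    exact (norm_sum_le _ _).trans (Finset.sum_le_sum fun j _ => hterm i j)
  set v : EuclideanSpace ℂ (Fin n) :=
    (WithLp.equiv 2 _).symm (fun i => ((a i : ℝ) : ℂ)) with hv
  have hvi : ∀ i, v i = ((a i : ℝ) : ℂ) := fun i => rfl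
  have hvnorm : ‖v‖ = 1 := by
    rw [EuclideanSpace.norm_eq]
    have h1 : ∀ i, ‖v i‖ ^ 2 = a i ^ 2 := by
      intro i
      rw [hvi i, Complex.norm_real, Real.norm_eq_abs, sq_abs]
    rw [Finset.sum_congr rfl (fun i _ => h1 i), hsum, Real.sqrt_one]
  have hTv : ∀ i, (T'' v) i = ∑ j, T' i j * ((a j : ℝ) : ℂ) := by
    intro i
    rw [hv, hT'', WithLp.equiv_symm_apply, Matrix.toEuclideanCLM_toLp]
    simp [Matrix.mulVec, dotProduct]
  have hinner : (inner ℂ (T'' v) v : ℂ) = ((∑ i, ∑ j, t i j * (a i * a j) : ℝ) : ℂ) := by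
    rw [PiLp.inner_apply]
    push_cast
    apply Finset.sum_congr rfl
    intro i _
    rw [RCLike.inner_apply, hTv i, hvi i, map_sum, Finset.mul_sum]
    apply Finset.sum_congr rfl
    intro j _
    have hij : T' i j = ((t i j : ℝ) : ℂ) := by
      by_cases h : i = j
      · subst h; simp [hT', htdef]
      · simp [hT', htdef, h]
    rw [hij, map_mul, Complex.conj_ofReal, Complex.conj_ofReal]
    ring
  have hfin : ∑ i, ∑ j, t i j * (a i * a j) ≤ nr T'' := by
    have h0 : (0:ℝ) ≤ ∑ i, ∑ j, t i j * (a i * a j) :=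
      Finset.sum_nonneg fun i _ => Finset.sum_nonneg fun j _ =>
        mul_nonneg (ht0 i j) (mul_nonneg (ha0 i) (ha0 j))
    have h1 := le_nr2 T'' v hvnorm
    rw [hinner] at h1
    rwa [Complex.norm_real, Real.norm_eq_abs, abs_of_nonneg h0] at h1
  exact hr.trans hfin
end

section
/- Let A ≥ 0 on H, B = diag(A,...,A) on ⊕ⁿH, and T = (T_{ij}) an n×n operator matrix with each T_{ij} admitting an A-adjoint. Then ‖T‖_B ≤ ‖(‖T_{ij}‖_A)‖, i.e., the B-operator seminorm of T is at most the operator norm of the n×n nonnegative matrix with entries ‖T_{ij}‖_A. -/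
open scoped ComplexOrder
open scoped InnerProductSpace
set_option synthInstance.maxHeartbeats 1000000
set_option maxHeartbeats 1000000
set_option linter.unusedSectionVars false

section AuxNormB
variable {H : Type*} [NormedAddCommGroup H] [InnerProductSpace ℂ H] [CompleteSpace H]

lemma inner_sq {R : H →L[ℂ] H} (hR : IsSelfAdjoint R) (x y : H) :
    ⟪x, (R * R) y⟫_ℂ = ⟪R x, R y⟫_ℂ := by
  nth_rewrite 3 [← hR.adjoint_eq]
  rw [ContinuousLinearMap.adjoint_inner_left]
  rfl

lemma normR_sq {R : H →L[ℂ] H} (hR : IsSelfAdjoint R) (y : H) :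
    (⟪y, (R * R) y⟫_ℂ).re = ‖R y‖ ^ 2 := by
  rw [inner_sq hR, ← RCLike.re_to_complex, inner_self_eq_norm_sq]

lemma step_ineq {R Q : H →L[ℂ] H} (hR : IsSelfAdjoint R)
    (hQ : (R * R) * Q = star Q * (R * R)) (x : H) :
    ‖R (Q x)‖ ^ 2 ≤ ‖R (Q (Q x))‖ * ‖R x‖ := by
  have h1 : (R * R) (Q x) = star Q ((R * R) x) := by
    have := congrArg (fun (S : H →L[ℂ] H) => S x) hQ
    simpa [ContinuousLinearMap.mul_apply] using this
  have key : (⟪Q x, (R * R) (Q x)⟫_ℂ).re = (⟪R (Q (Q x)), R x⟫_ℂ).re := by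
    rw [h1, ContinuousLinearMap.star_eq_adjoint, ContinuousLinearMap.adjoint_inner_right,
      inner_sq hR]
  calc ‖R (Q x)‖ ^ 2 = (⟪Q x, (R * R) (Q x)⟫_ℂ).re := (normR_sq hR _).symm
    _ = (⟪R (Q (Q x)), R x⟫_ℂ).re := key
    _ ≤ ‖R (Q (Q x))‖ * ‖R x‖ := by
        rw [← RCLike.re_to_complex]
        exact (RCLike.re_le_norm _).trans (norm_inner_le_norm _ _)

lemma commute_pow {R Q : H →L[ℂ] H}
    (hQ : (R * R) * Q = star Q * (R * R)) (m : ℕ) :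
    (R * R) * Q ^ m = star (Q ^ m) * (R * R) := by
  induction m with
  | zero => simp
  | succ k ih =>
    calc (R*R) * Q^(k+1) = ((R*R) * Q^k) * Q := by rw [pow_succ, ← mul_assoc]
      _ = star (Q^k) * ((R*R) * Q) := by rw [ih, mul_assoc]
      _ = star (Q^k) * (star Q * (R*R)) := by rw [hQ]
      _ = (star (Q^k) * star Q) * (R*R) := by rw [mul_assoc]
      _ = star (Q ^ (k+1)) * (R*R) := by rw [← star_mul, ← pow_succ']

lemma Asa_bound {R P : H →L[ℂ] H} (hR : IsSelfAdjoint R)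
    (hP : (R * R) * P = star P * (R * R)) (x : H) :
    ‖R (P x)‖ ≤ ‖P‖ * ‖R x‖ := by
  rcases eq_or_ne (‖R x‖) 0 with hb | hb
  · have h := step_ineq hR hP x
    rw [hb, mul_zero] at h
    have : ‖R (P x)‖ = 0 := by nlinarith [norm_nonneg (R (P x))]
    rw [this, hb, mul_zero]
  have hb' : 0 < ‖R x‖ := (norm_nonneg _).lt_of_ne' hb
  rcases eq_or_ne P 0 with hP0 | hP0
  · simp [hP0]
  have hPpos : 0 < ‖P‖ := norm_pos_iff.mpr hP0
  have iter : ∀ k : ℕ, ‖R (P x)‖ ^ (2^k) * ‖R x‖ ≤ ‖R ((P ^ (2^k)) x)‖ * ‖R x‖ ^ (2^k) := by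
    intro k
    induction k with
    | zero => simp
    | succ k ih =>
      have hQ := commute_pow hP (2^k)
      have hstep := step_ineq hR hQ x
      have happ : (P ^ (2^k)) ((P ^ (2^k)) x) = (P ^ (2^(k+1))) x := by
        rw [pow_succ, pow_mul, pow_two, ContinuousLinearMap.mul_apply]
      rw [happ] at hstep
      have hsq : (‖R (P x)‖ ^ (2^k) * ‖R x‖) ^ 2 ≤ (‖R ((P ^ (2^k)) x)‖ * ‖R x‖ ^ (2^k)) ^ 2 :=
        pow_le_pow_left₀ (by positivity) ih 2
      have e1 : (‖R (P x)‖ ^ (2^k) * ‖R x‖) ^ 2 = ‖R (P x)‖ ^ (2^(k+1)) * ‖R x‖ * ‖R x‖ := by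
        rw [show (2:ℕ)^(k+1) = 2^k * 2 from pow_succ 2 k, pow_mul]; ring
      have e2 : (‖R ((P ^ (2^k)) x)‖ * ‖R x‖ ^ (2^k)) ^ 2
          = ‖R ((P ^ (2^k)) x)‖ ^ 2 * ‖R x‖ ^ (2^(k+1)) := by
        rw [show (2:ℕ)^(k+1) = 2^k * 2 from pow_succ 2 k, pow_mul]; ring
      rw [e1, e2] at hsq
      have h3 : ‖R (P x)‖ ^ (2^(k+1)) * ‖R x‖ * ‖R x‖
          ≤ (‖R ((P ^ (2^(k+1))) x)‖ * ‖R x‖ ^ (2^(k+1))) * ‖R x‖ := by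
        calc _ ≤ ‖R ((P ^ (2^k)) x)‖ ^ 2 * ‖R x‖ ^ (2^(k+1)) := hsq
          _ ≤ (‖R ((P ^ (2^(k+1))) x)‖ * ‖R x‖) * ‖R x‖ ^ (2^(k+1)) :=
              mul_le_mul_of_nonneg_right hstep (by positivity)
          _ = (‖R ((P ^ (2^(k+1))) x)‖ * ‖R x‖ ^ (2^(k+1))) * ‖R x‖ := by ring
      exact le_of_mul_le_mul_right h3 hb'
  by_contra hcon
  push_neg at hcon
  set a := ‖R (P x)‖
  set b := ‖R x‖
  set t := a / (‖P‖ * b) with ht_def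
  have ht : 1 < t := (one_lt_div (by positivity)).mpr hcon
  obtain ⟨m, hm⟩ := pow_unbounded_of_one_lt (‖R‖ * ‖x‖ / b) ht
  have hm2 : t ^ m ≤ t ^ (2^m) := pow_le_pow_right₀ ht.le (Nat.le_of_lt (Nat.lt_two_pow_self (n := m)))
  have hbound : t ^ (2^m) ≤ ‖R‖ * ‖x‖ / b := by
    have h1 := iter m
    have h2 : ‖R ((P ^ (2^m)) x)‖ ≤ ‖R‖ * (‖P‖ ^ (2^m) * ‖x‖) := by
      calc ‖R ((P ^ (2^m)) x)‖ ≤ ‖R‖ * ‖(P ^ (2^m)) x‖ := R.le_opNorm _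
        _ ≤ ‖R‖ * (‖P ^ (2^m)‖ * ‖x‖) :=
            mul_le_mul_of_nonneg_left ((P ^ (2^m)).le_opNorm x) (norm_nonneg R)
        _ ≤ ‖R‖ * (‖P‖ ^ (2^m) * ‖x‖) :=
            mul_le_mul_of_nonneg_left
              (mul_le_mul_of_nonneg_right (norm_pow_le' _ (pow_pos two_pos m)) (norm_nonneg x))
              (norm_nonneg R)
    have h4 : a ^ (2^m) * b ≤ ‖R‖ * ‖x‖ * (‖P‖ * b) ^ (2^m) := by
      calc a ^ (2^m) * b ≤ ‖R ((P ^ (2^m)) x)‖ * b ^ (2^m) := h1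
        _ ≤ ‖R‖ * (‖P‖ ^ (2^m) * ‖x‖) * b ^ (2^m) :=
            mul_le_mul_of_nonneg_right h2 (by positivity)
        _ = ‖R‖ * ‖x‖ * (‖P‖ * b) ^ (2^m) := by rw [mul_pow]; ring
    rw [ht_def, div_pow, div_le_div_iff₀ (by positivity) hb']
    exact h4
  exact absurd (hm.trans_le (hm2.trans hbound)) (lt_irrefl _)


lemma pos_of_inner (A : H →L[ℂ] H) (hA : ∀ x : H, 0 ≤ (inner ℂ x (A x) : ℂ)) : 0 ≤ A := by
  rw [ContinuousLinearMap.nonneg_iff_isPositive, ContinuousLinearMap.isPositive_iff_complex]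
  intro x
  have h := hA x
  rw [Complex.nonneg_iff] at h
  have h1 : ⟪A x, x⟫_ℂ = starRingEnd ℂ ⟪x, A x⟫_ℂ := (inner_conj_symm _ _).symm
  have h2 : ⟪A x, x⟫_ℂ = ⟪x, A x⟫_ℂ := by
    rw [h1]; exact Complex.conj_eq_iff_im.mpr h.2.symm
  constructor
  · rw [h2]; exact (Complex.conj_eq_iff_re.mp (Complex.conj_eq_iff_im.mpr h.2.symm)).symm ▸ rfl
  · rw [h2]; exact h.1

lemma adj_bound {R S M : H →L[ℂ] H} (hR : IsSelfAdjoint R)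
    (hS : (R * R).comp S = (ContinuousLinearMap.adjoint M).comp (R * R)) (x : H) :
    ‖R (M x)‖ ^ 2 ≤ ‖S * M‖ * ‖R x‖ ^ 2 := by
  have hAsa : IsSelfAdjoint (R * R) := by
    rw [IsSelfAdjoint, star_mul, hR.star_eq]
  have hm : (R * R) * S = star M * (R * R) := by
    rw [ContinuousLinearMap.mul_def (R*R) S, ContinuousLinearMap.mul_def (star M),
      ContinuousLinearMap.star_eq_adjoint]
    exact hS
  have hSA : star S * (R * R) = (R * R) * M := by
    rw [← hAsa.star_eq, ← star_mul, hm, star_mul, star_star]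
  have hP : (R * R) * (S * M) = star (S * M) * (R * R) := by
    calc (R*R) * (S*M) = ((R*R) * S) * M := (mul_assoc _ _ _).symm
      _ = (star M * (R*R)) * M := by rw [hm]
      _ = star M * ((R*R) * M) := mul_assoc _ _ _
      _ = star M * (star S * (R*R)) := by rw [← hSA]
      _ = (star M * star S) * (R*R) := (mul_assoc _ _ _).symm
      _ = star (S * M) * (R*R) := by rw [← star_mul]
  have h1 : (R * R) ((S * M) x) = ContinuousLinearMap.adjoint M ((R * R) (M x)) := by
    have := congrArg (fun (W : H →L[ℂ] H) => W (M x)) hm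
    simpa [ContinuousLinearMap.mul_apply, ContinuousLinearMap.star_eq_adjoint] using this
  have key : (⟪M x, (R * R) (M x)⟫_ℂ).re = (⟪R x, R ((S * M) x)⟫_ℂ).re := by
    rw [← ContinuousLinearMap.adjoint_inner_right M x ((R * R) (M x)), ← h1, inner_sq hR]
  have hb := Asa_bound hR hP x
  calc ‖R (M x)‖ ^ 2 = (⟪M x, (R * R) (M x)⟫_ℂ).re := (normR_sq hR _).symm
    _ = (⟪R x, R ((S * M) x)⟫_ℂ).re := key
    _ ≤ ‖R x‖ * ‖R ((S * M) x)‖ := by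
        rw [← RCLike.re_to_complex]
        exact (RCLike.re_le_norm _).trans (norm_inner_le_norm _ _)
    _ ≤ ‖R x‖ * (‖S * M‖ * ‖R x‖) :=
        mul_le_mul_of_nonneg_left hb (norm_nonneg _)
    _ = ‖S * M‖ * ‖R x‖ ^ 2 := by ring

lemma closure_zero {R : H →L[ℂ] H} (hR : IsSelfAdjoint R) {p : H}
    (hp : p ∈ closure (Set.range (R * R : H →L[ℂ] H))) (hRp : R p = 0) : p = 0 := by
  have hAsa : IsSelfAdjoint (R * R) := by
    rw [IsSelfAdjoint, star_mul, hR.star_eq]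
  have hAp : (R * R) p = 0 := by
    rw [ContinuousLinearMap.mul_apply, hRp, map_zero]
  have horth : Set.range (R * R : H →L[ℂ] H) ⊆ {z : H | ⟪z, p⟫_ℂ = 0} := by
    rintro _ ⟨w, rfl⟩
    show ⟪(R * R) w, p⟫_ℂ = 0
    rw [← hAsa.adjoint_eq, ContinuousLinearMap.adjoint_inner_left, hAp, inner_zero_right]
  have hclosed : IsClosed {z : H | ⟪z, p⟫_ℂ = 0} :=
    isClosed_eq (Continuous.inner continuous_id continuous_const) continuous_const
  have : ⟪p, p⟫_ℂ = 0 := closure_minimal horth hclosed hp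
  exact inner_self_eq_zero.mp this

lemma normA_nonneg (A T : H →L[ℂ] H) : 0 ≤ normA A T :=
  Real.sSup_nonneg (by rintro r ⟨x, hx, hx0, rfl⟩; positivity)

lemma normA_bound {R : H →L[ℂ] H} (hR : IsSelfAdjoint R) (M : H →L[ℂ] H)
    (hadj : ∃ S : H →L[ℂ] H, (R * R : H →L[ℂ] H).comp S = (ContinuousLinearMap.adjoint M).comp (R * R))
    {p : H} (hp : p ∈ closure (Set.range (R * R : H →L[ℂ] H))) :
    ‖R (M p)‖ ≤ normA (R * R) M * ‖R p‖ := by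
  obtain ⟨S, hS⟩ := hadj
  set c := Real.sqrt ‖S * M‖ with hc
  have hpt : ∀ y : H, ‖R (M y)‖ ≤ c * ‖R y‖ := by
    intro y
    have h := adj_bound hR hS y
    have h2 : ‖R (M y)‖ ^ 2 ≤ (c * ‖R y‖) ^ 2 := by
      rw [mul_pow, hc, Real.sq_sqrt (norm_nonneg _)]; exact h
    calc ‖R (M y)‖ = Real.sqrt (‖R (M y)‖ ^ 2) := (Real.sqrt_sq (norm_nonneg _)).symm
      _ ≤ Real.sqrt ((c * ‖R y‖) ^ 2) := Real.sqrt_le_sqrt h2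
      _ = c * ‖R y‖ := Real.sqrt_sq (by positivity)
  have hform : ∀ y : H, Real.sqrt ((⟪y, (R * R) y⟫_ℂ).re) = ‖R y‖ := by
    intro y; rw [normR_sq hR, Real.sqrt_sq (norm_nonneg _)]
  have hbdd : BddAbove {r : ℝ | ∃ x ∈ closure (Set.range ((R*R : H →L[ℂ] H))), x ≠ 0 ∧
      r = Real.sqrt ((⟪M x, (R*R) (M x)⟫_ℂ).re) / Real.sqrt ((⟪x, (R*R) x⟫_ℂ).re)} := by
    refine ⟨c, ?_⟩
    rintro r ⟨y, hy, hy0, rfl⟩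
    rw [hform, hform]
    rcases eq_or_lt_of_le (norm_nonneg (R y)) with h0 | h0
    · have h1 : ‖R (M y)‖ = 0 := le_antisymm (by simpa [← h0] using hpt y) (norm_nonneg _)
      simp only [h1, ← h0, zero_div]
      exact Real.sqrt_nonneg _
    · rw [div_le_iff₀ h0]; exact hpt y
  rcases eq_or_ne p 0 with rfl | hp0
  · simp only [map_zero, norm_zero, mul_zero, le_refl]
  have hRp : R p ≠ 0 := fun h => hp0 (closure_zero hR hp h)
  have hRp' : 0 < ‖R p‖ := norm_pos_iff.mpr hRp
  have hmem : ‖R (M p)‖ / ‖R p‖ ∈ {r : ℝ | ∃ x ∈ closure (Set.range ((R*R : H →L[ℂ] H))),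
      x ≠ 0 ∧ r = Real.sqrt ((⟪M x, (R*R) (M x)⟫_ℂ).re) / Real.sqrt ((⟪x, (R*R) x⟫_ℂ).re)} :=
    ⟨p, hp, hp0, by rw [hform, hform]⟩
  have hle := le_csSup hbdd hmem
  rw [show normA (R*R) M = sSup {r : ℝ | ∃ x ∈ closure (Set.range ((R*R : H →L[ℂ] H))),
      x ≠ 0 ∧ r = Real.sqrt ((⟪M x, (R*R) (M x)⟫_ℂ).re) / Real.sqrt ((⟪x, (R*R) x⟫_ℂ).re)}
    from rfl]
  exact (div_le_iff₀ hRp').mp hle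

end AuxNormB

/-- For `A ≥ 0`, `B = diag(A,…,A)` and `T = (M i j)` an `n × n` operator matrix whose
entries admit A-adjoints, the B-operator seminorm of `T` is at most the operator norm of
the `n × n` matrix `(‖M i j‖_A)`. -/
theorem normB_opMatrix_le (n : ℕ) {H : Type*} [NormedAddCommGroup H]
    [InnerProductSpace ℂ H] [CompleteSpace H] (A : H →L[ℂ] H)
    (hA : ∀ x : H, 0 ≤ (inner ℂ x (A x) : ℂ))
    (M : Fin n → Fin n → (H →L[ℂ] H))
    (hadj : ∀ i j, ∃ S : H →L[ℂ] H,
      A.comp S = (ContinuousLinearMap.adjoint (M i j)).comp A)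
    (B T : (PiLp 2 fun _ : Fin n => H) →L[ℂ] (PiLp 2 fun _ : Fin n => H))
    (hB : ∀ x i, B x i = A (x i))
    (hT : ∀ x, ∀ i, T x i = ∑ j, M i j (x j)) :
    normA B T ≤ ‖Matrix.toEuclideanCLM (𝕜 := ℂ)
      (Matrix.of fun i j => ((normA A (M i j) : ℝ) : ℂ))‖ := by
  have hA0 : 0 ≤ A := pos_of_inner A hA
  set R := CFC.sqrt A with hRdef
  have hR2 : R * R = A := by
    have := CFC.sq_sqrt A hA0
    rwa [pow_two] at this
  have hRsa : IsSelfAdjoint R :=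
    ((ContinuousLinearMap.nonneg_iff_isPositive R).mp (CFC.sqrt_nonneg (a := A))).isSelfAdjoint
  set C := Matrix.toEuclideanCLM (𝕜 := ℂ)
      (Matrix.of fun i j => ((normA A (M i j) : ℝ) : ℂ)) with hCdef
  unfold normA
  apply Real.sSup_le _ (norm_nonneg C)
  rintro r ⟨x, hx, hx0, rfl⟩
  -- components live in closure (range A)
  have hcomp : ∀ i, x i ∈ closure (Set.range (R * R : H →L[ℂ] H)) := by
    rw [hR2]
    intro i
    have hcont : Continuous fun y : PiLp 2 (fun _ : Fin n => H) => y i :=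
      (PiLp.proj (𝕜 := ℂ) 2 (fun _ : Fin n => H) i).continuous
    have h1 : x i ∈ closure ((fun y : PiLp 2 (fun _ : Fin n => H) => y i) '' (Set.range B)) :=
      (image_closure_subset_closure_image hcont) (Set.mem_image_of_mem _ hx)
    have himg : (fun y : PiLp 2 (fun _ : Fin n => H) => y i) '' (Set.range B)
        ⊆ Set.range A := by
      rintro _ ⟨_, ⟨y, rfl⟩, rfl⟩
      exact ⟨y i, (hB y i).symm⟩
    exact closure_mono himg h1
  have hMb : ∀ i j, ‖R (M i j (x j))‖ ≤ normA A (M i j) * ‖R (x j)‖ := by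
    intro i j
    obtain ⟨S, hS⟩ := hadj i j
    rw [← hR2] at hS ⊢
    exact normA_bound hRsa (M i j) ⟨S, hS⟩ (hcomp j)
  -- denominator
  have hden : ((inner ℂ x (B x) : ℂ)).re = ∑ i, ‖R (x i)‖ ^ 2 := by
    rw [PiLp.inner_apply, Complex.re_sum]
    refine Finset.sum_congr rfl fun i _ => ?_
    rw [hB, ← hR2]
    exact normR_sq hRsa (x i)
  have hnum : ((inner ℂ (T x) (B (T x)) : ℂ)).re = ∑ i, ‖R (T x i)‖ ^ 2 := by
    rw [PiLp.inner_apply, Complex.re_sum]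
    refine Finset.sum_congr rfl fun i _ => ?_
    rw [hB, ← hR2]
    exact normR_sq hRsa (T x i)
  have hrow : ∀ i, ‖R (T x i)‖ ≤ ∑ j, normA A (M i j) * ‖R (x j)‖ := by
    intro i
    rw [hT]
    calc ‖R (∑ j, M i j (x j))‖ = ‖∑ j, R (M i j (x j))‖ := by rw [map_sum]
      _ ≤ ∑ j, ‖R (M i j (x j))‖ := norm_sum_le _ _
      _ ≤ ∑ j, normA A (M i j) * ‖R (x j)‖ := Finset.sum_le_sum fun j _ => hMb i j
  -- euclidean vector
  set w : Fin n → ℂ := fun j => ((‖R (x j)‖ : ℝ) : ℂ) with hwdef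
  set v : EuclideanSpace ℂ (Fin n) := (WithLp.equiv 2 (Fin n → ℂ)).symm w with hvdef
  have hv : ‖v‖ ^ 2 = ∑ j, ‖R (x j)‖ ^ 2 := by
    rw [EuclideanSpace.norm_eq, Real.sq_sqrt (by positivity)]
    refine Finset.sum_congr rfl fun j _ => ?_
    rw [hvdef, WithLp.equiv_symm_apply, PiLp.toLp_apply, hwdef]
    rw [Complex.norm_real, Real.norm_eq_abs, abs_of_nonneg (norm_nonneg _)]
  have hCv : ∀ i, ‖(C v) i‖ = ∑ j, normA A (M i j) * ‖R (x j)‖ := by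
    intro i
    rw [hCdef, hvdef, WithLp.equiv_symm_apply, Matrix.toEuclideanCLM_toLp, PiLp.toLp_apply]
    have hmv : (Matrix.of fun i j => ((normA A (M i j) : ℝ) : ℂ)).mulVec w i
        = ((∑ j, normA A (M i j) * ‖R (x j)‖ : ℝ) : ℂ) := by
      simp only [Matrix.mulVec, dotProduct, Matrix.of_apply, hwdef]
      push_cast
      ring
    rw [hmv, Complex.norm_real, Real.norm_eq_abs, abs_of_nonneg]
    exact Finset.sum_nonneg fun j _ => mul_nonneg (normA_nonneg _ _) (norm_nonneg _)
  have hCv2 : ‖C v‖ ^ 2 = ∑ i, ‖(C v) i‖ ^ 2 := by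
    rw [EuclideanSpace.norm_eq, Real.sq_sqrt (by positivity)]
  have hnum_le : ((inner ℂ (T x) (B (T x)) : ℂ)).re ≤ (‖C‖ * ‖v‖) ^ 2 := by
    calc ((inner ℂ (T x) (B (T x)) : ℂ)).re = ∑ i, ‖R (T x i)‖ ^ 2 := hnum
      _ ≤ ∑ i, (∑ j, normA A (M i j) * ‖R (x j)‖) ^ 2 :=
          Finset.sum_le_sum fun i _ => pow_le_pow_left₀ (norm_nonneg _) (hrow i) 2
      _ = ∑ i, ‖(C v) i‖ ^ 2 := by
          refine Finset.sum_congr rfl fun i _ => ?_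
          rw [hCv]
      _ = ‖C v‖ ^ 2 := hCv2.symm
      _ ≤ (‖C‖ * ‖v‖) ^ 2 :=
          pow_le_pow_left₀ (norm_nonneg _) (C.le_opNorm v) 2
  have hden_sqrt : Real.sqrt (((inner ℂ x (B x) : ℂ)).re) = ‖v‖ := by
    rw [hden, ← hv, Real.sqrt_sq (norm_nonneg _)]
  have hnum_sqrt : Real.sqrt (((inner ℂ (T x) (B (T x)) : ℂ)).re) ≤ ‖C‖ * ‖v‖ := by
    calc Real.sqrt (((inner ℂ (T x) (B (T x)) : ℂ)).re) ≤ Real.sqrt ((‖C‖ * ‖v‖) ^ 2) :=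
        Real.sqrt_le_sqrt hnum_le
      _ = ‖C‖ * ‖v‖ := Real.sqrt_sq (by positivity)
  rw [hden_sqrt]
  rcases eq_or_lt_of_le (norm_nonneg v) with h0 | h0
  · rw [← h0, div_zero]
    exact norm_nonneg C
  · rw [div_le_iff₀ h0]
    exact hnum_sqrt
end

section
/- For an n×n complex matrix T = (t_{ij}) with all entries t_{ij} ≥ 0, the numerical radius satisfies w(T) = (1/2) r((t_{ij} + t_{ji})), the spectral radius of the symmetrized matrix. -/
open scoped ComplexOrder

section aux
variable {H : Type*} [NormedAddCommGroup H] [InnerProductSpace ℂ H] (T : H →L[ℂ] H)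

lemma nr_bdd : BddAbove {r : ℝ | ∃ x : H, ‖x‖ = 1 ∧ r = ‖(inner ℂ (T x) x : ℂ)‖} := by
  refine ⟨‖T‖, ?_⟩
  rintro r ⟨x, hx, rfl⟩
  calc ‖(inner ℂ (T x) x : ℂ)‖ ≤ ‖T x‖ * ‖x‖ := norm_inner_le_norm _ _
    _ ≤ (‖T‖ * ‖x‖) * ‖x‖ := by gcongr; exact T.le_opNorm x
    _ = ‖T‖ := by rw [hx]; ring

lemma le_nr (x : H) (hx : ‖x‖ = 1) : ‖(inner ℂ (T x) x : ℂ)‖ ≤ nr T :=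
  le_csSup (nr_bdd T) ⟨x, hx, rfl⟩

lemma nr_le {c : ℝ} (hc : 0 ≤ c) (h : ∀ x : H, ‖x‖ = 1 → ‖(inner ℂ (T x) x : ℂ)‖ ≤ c) :
    nr T ≤ c :=
  Real.sSup_le (by rintro r ⟨x, hx, rfl⟩; exact h x hx) hc

lemma nr_nonneg : 0 ≤ nr T :=
  Real.sSup_nonneg (by rintro r ⟨x, hx, rfl⟩; positivity)

lemma nr_le_norm : nr T ≤ ‖T‖ := by
  refine nr_le T (norm_nonneg _) fun x hx => ?_
  calc ‖(inner ℂ (T x) x : ℂ)‖ ≤ ‖T x‖ * ‖x‖ := norm_inner_le_norm _ _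
    _ ≤ (‖T‖ * ‖x‖) * ‖x‖ := by gcongr; exact T.le_opNorm x
    _ = ‖T‖ := by rw [hx]; ring

end aux

/-- For an `n × n` complex matrix with (real) nonnegative entries, the numerical radius
equals half the spectral radius of the symmetrized matrix. -/
theorem nr_eq_half_spectralRadius_symmetrized (n : ℕ) (T : Matrix (Fin n) (Fin n) ℂ)
    (hT : ∀ i j, 0 ≤ T i j) :
    nr (Matrix.toEuclideanCLM (𝕜 := ℂ) T) =
      (1/2) * (spectralRadius ℂ (Matrix.toEuclideanCLM (𝕜 := ℂ)
        (Matrix.of fun i j => T i j + T j i))).toReal := by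
  have him : ∀ i j, (T i j).im = 0 := fun i j => ((Complex.le_def.mp (hT i j)).2).symm
  have hre0 : ∀ i j, 0 ≤ (T i j).re := fun i j => (Complex.le_def.mp (hT i j)).1
  have hconj : ∀ i j, (starRingEnd ℂ) (T i j) = T i j := fun i j =>
    Complex.conj_eq_iff_im.mpr (him i j)
  have hTre : ∀ i j, T i j = (((T i j).re : ℝ) : ℂ) := fun i j => by
    rw [Complex.ext_iff]; simp [him i j]
  set A := Matrix.toEuclideanCLM (𝕜 := ℂ) T with hA
  have hM : (Matrix.of fun i j => T i j + T j i) = T + star T := by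
    ext i j
    simp [Matrix.add_apply, Matrix.star_apply, hconj j i]
  have hBA : Matrix.toEuclideanCLM (𝕜 := ℂ) (Matrix.of fun i j => T i j + T j i)
      = A + star A := by
    rw [hM, map_add, map_star]
  set B := A + star A with hB
  have hsa : IsSelfAdjoint B := by
    rw [IsSelfAdjoint, hB, star_add (R := EuclideanSpace ℂ (Fin n) →L[ℂ] EuclideanSpace ℂ (Fin n)), star_star, add_comm]
  rw [hBA, hsa.spectralRadius_eq_nnnorm]
  have hstar : ∀ x : EuclideanSpace ℂ (Fin n),
      (inner ℂ ((star A) x) x : ℂ) = (starRingEnd ℂ) (inner ℂ (A x) x : ℂ) := by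
    intro x
    rw [ContinuousLinearMap.star_eq_adjoint, ContinuousLinearMap.adjoint_inner_left,
      inner_conj_symm]
  have hBx : ∀ x : EuclideanSpace ℂ (Fin n),
      (inner ℂ (B x) x : ℂ) = (inner ℂ (A x) x : ℂ) + (starRingEnd ℂ) (inner ℂ (A x) x : ℂ) := by
    intro x
    rw [hB]
    simp only [ContinuousLinearMap.add_apply, inner_add_left]
    rw [hstar]
  have hnrA := nr_nonneg A
  have hnrB := nr_nonneg B
  -- claim 1 : nr B ≤ 2 * nr A
  have claim1 : nr B ≤ 2 * nr A := by
    refine nr_le B (by linarith) fun x hx => ?_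
    rw [hBx]
    calc ‖(inner ℂ (A x) x : ℂ) + (starRingEnd ℂ) (inner ℂ (A x) x : ℂ)‖
        ≤ ‖(inner ℂ (A x) x : ℂ)‖ + ‖(starRingEnd ℂ) (inner ℂ (A x) x : ℂ)‖ := norm_add_le _ _
      _ = 2 * ‖(inner ℂ (A x) x : ℂ)‖ := by rw [RCLike.norm_conj]; ring
      _ ≤ 2 * nr A := by have := le_nr A x hx; linarith
  -- inner formula
  have hinnerA : ∀ z : EuclideanSpace ℂ (Fin n),
      (inner ℂ (A z) z : ℂ) = ∑ i, ∑ j, (starRingEnd ℂ) (T i j) * (starRingEnd ℂ) (z j) * z i := by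
    intro z
    show (∑ i, z i * (starRingEnd ℂ) (∑ j, T i j * z j)) = _
    refine Finset.sum_congr rfl fun i _ => ?_
    rw [map_sum, Finset.mul_sum]
    exact Finset.sum_congr rfl fun j _ => by rw [map_mul]; ring
  -- claim 2 : nr A ≤ (1/2) * nr B
  have claim2 : nr A ≤ (1/2) * nr B := by
    refine nr_le A (by linarith) fun x hx => ?_
    set y : EuclideanSpace ℂ (Fin n) := (WithLp.equiv 2 _).symm fun i => ((‖x i‖ : ℝ) : ℂ) with hy
    have hyi : ∀ i, y i = ((‖x i‖ : ℝ) : ℂ) := fun i => rfl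
    have hy1 : ‖y‖ = 1 := by
      rw [← hx, EuclideanSpace.norm_eq, EuclideanSpace.norm_eq]
      congr 1
      refine Finset.sum_congr rfl fun i _ => ?_
      simp [hyi]
    set S : ℝ := ∑ i, ∑ j, (T i j).re * ‖x j‖ * ‖x i‖ with hS
    have hS0 : 0 ≤ S := by
      apply Finset.sum_nonneg; intro i _
      apply Finset.sum_nonneg; intro j _
      have := hre0 i j
      positivity
    have hAyy : (inner ℂ (A y) y : ℂ) = (S : ℂ) := by
      rw [hinnerA, hS]
      push_cast
      refine Finset.sum_congr rfl fun i _ => Finset.sum_congr rfl fun j _ => ?_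
      rw [hconj, hyi, hyi, Complex.conj_ofReal]
      conv_lhs => rw [hTre i j]
    have hxS : ‖(inner ℂ (A x) x : ℂ)‖ ≤ S := by
      rw [hinnerA, hS]
      calc ‖∑ i, ∑ j, (starRingEnd ℂ) (T i j) * (starRingEnd ℂ) (x j) * x i‖
          ≤ ∑ i, ‖∑ j, (starRingEnd ℂ) (T i j) * (starRingEnd ℂ) (x j) * x i‖ :=
            norm_sum_le _ _
        _ ≤ ∑ i, ∑ j, ‖(starRingEnd ℂ) (T i j) * (starRingEnd ℂ) (x j) * x i‖ := by
            gcongr with i _; exact norm_sum_le _ _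
        _ = ∑ i, ∑ j, (T i j).re * ‖x j‖ * ‖x i‖ := by
            refine Finset.sum_congr rfl fun i _ => Finset.sum_congr rfl fun j _ => ?_
            rw [norm_mul, norm_mul, RCLike.norm_conj, RCLike.norm_conj]
            congr 2
            conv_lhs => rw [hTre i j]
            rw [Complex.norm_real, Real.norm_of_nonneg (hre0 i j)]
    have hByy : ‖(inner ℂ (B y) y : ℂ)‖ = 2 * S := by
      rw [hBx, hAyy, Complex.conj_ofReal, ← Complex.ofReal_add]
      rw [Complex.norm_real, Real.norm_of_nonneg (by linarith : (0:ℝ) ≤ S + S)]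
      ring
    have h2S : 2 * S ≤ nr B := hByy ▸ le_nr B y hy1
    linarith [hxS]
  -- claim 4 : ‖B‖ ≤ nr B via spectrum
  have hnormB : ‖B‖ ≤ nr B := by
    have hspec : spectrum ℂ B = spectrum ℂ (Matrix.toLinAlgEquiv' (T + star T)) := by
      have e1 := AlgEquiv.spectrum_eq (Matrix.toEuclideanCLM (n := Fin n) (𝕜 := ℂ)) (T + star T)
      have e2 := AlgEquiv.spectrum_eq (Matrix.toLinAlgEquiv' (R := ℂ) (n := Fin n)) (T + star T)
      rw [e2, ← e1, map_add, map_star]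
    have key : ∀ lam ∈ spectrum ℂ B, ‖lam‖ ≤ nr B := by
      intro lam hlam
      rw [hspec] at hlam
      obtain ⟨v, hv⟩ := (Module.End.hasEigenvalue_iff_mem_spectrum.mpr hlam).exists_hasEigenvector
      have hv0 : v ≠ 0 := hv.right
      have hfv : Matrix.mulVec (T + star T) v = lam • v := by
        have := hv.apply_eq_smul
        rwa [Matrix.toLinAlgEquiv'_apply] at this
      set u : EuclideanSpace ℂ (Fin n) := (WithLp.equiv 2 _).symm v with hu
      have hu0 : u ≠ 0 := by
        intro h
        exact hv0 ((WithLp.equiv 2 _).symm.injective (h.trans rfl))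
      have hBu : B u = lam • u := by
        rw [← hBA, hM, hu, WithLp.equiv_symm_apply, Matrix.toEuclideanCLM_toLp, hfv]
        rfl
      set x : EuclideanSpace ℂ (Fin n) := (‖u‖⁻¹ : ℂ) • u with hxdef
      have hx1 : ‖x‖ = 1 := norm_smul_inv_norm hu0
      have hBxx : (inner ℂ (B x) x : ℂ) = (starRingEnd ℂ) lam := by
        have hBxval : B x = lam • x := by
          rw [hxdef, map_smul, hBu, smul_comm]
        rw [hBxval, inner_smul_left, inner_self_eq_norm_sq_to_K, hx1]
        norm_num
      have := le_nr B x hx1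
      rwa [hBxx, RCLike.norm_conj] at this
    have hsr : (‖B‖₊ : ENNReal) ≤ ENNReal.ofReal (nr B) := by
      rw [← hsa.spectralRadius_eq_nnnorm, spectralRadius]
      refine iSup₂_le fun k hk => ?_
      rw [← enorm_eq_nnnorm, ← ofReal_norm]
      exact ENNReal.ofReal_le_ofReal (key k hk)
    rw [← enorm_eq_nnnorm, ← ofReal_norm, ENNReal.ofReal_le_ofReal_iff hnrB] at hsr
    exact hsr
  have claim3 : nr B ≤ ‖B‖ := nr_le_norm B
  have : (↑‖B‖₊ : ENNReal).toReal = ‖B‖ := by rw [ENNReal.coe_toReal, coe_nnnorm]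
  rw [this]
  linarith
end
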